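/- Let B be a symmetric n×n matrix over 𝔽₂ and suppose B = L·D·Lᵀ = M·E·Mᵀ, where L and M are lower-triangular n×n matrices over 𝔽₂ with all diagonal entries equal to 1, and D and E are both symmetric block-diagonal matrices whose diagonal blocks are either 1×1 blocks or 2×2 blocks equal to [[0,1],[1,0]] (concretely: each of D, E is tridiagonal and symmetric, and whenever its off-diagonal entry at position (i,i+1) equals 1, its diagonal entries at positions (i,i) and (i+1,i+1) vanish and its off-diagonal entries at positions (i−1,i) and (i+1,i+2) vanish). Then D = E. -/

import Mathlib

open Matrix

/-- `D` is block-diagonal with diagonal blocks that are either `1×1` or the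
`2×2` block `[[0,1],[1,0]]`. -/
def IsCanonBlockDiag {n : ℕ} (D : Matrix (Fin n) (Fin n) (ZMod 2)) : Prop :=
  D.IsSymm ∧
  (∀ i j : Fin n, (i.1 + 1 < j.1 ∨ j.1 + 1 < i.1) → D i j = 0) ∧
  (∀ i j : Fin n, i.1 + 1 = j.1 → D i j = 1 →
    D i i = 0 ∧ D j j = 0 ∧
    (∀ k : Fin n, k.1 + 1 = i.1 → D k i = 0) ∧
    (∀ k : Fin n, j.1 + 1 = k.1 → D j k = 0))

lemma zmod2_ne_zero_iff (a : ZMod 2) : a ≠ 0 ↔ a = 1 := by revert a; decide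

lemma zmod2_eq_of_ne_iff {a b : ZMod 2} (h : a ≠ 0 ↔ b ≠ 0) : a = b := by
  revert h; revert a b; decide

variable {m : ℕ} {A : Matrix (Fin m) (Fin m) (ZMod 2)}

lemma canon_band (h : IsCanonBlockDiag A) {i j : Fin m} (hij : A i j ≠ 0) :
    j.1 ≤ i.1 + 1 ∧ i.1 ≤ j.1 + 1 := by
  by_contra hc
  have : i.1 + 1 < j.1 ∨ j.1 + 1 < i.1 := by omega
  exact hij (h.2.1 i j this)

lemma canon_row_unique (h : IsCanonBlockDiag A) {i j j' : Fin m}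
    (hj : A i j ≠ 0) (hj' : A i j' ≠ 0) : j = j' := by
  -- helper: no strictly ordered pair
  have key : ∀ p q : Fin m, A i p ≠ 0 → A i q ≠ 0 → p.1 < q.1 → False := by
    intro p q hp hq hpq
    have hbp := canon_band h hp
    have hbq := canon_band h hq
    have hcases : (p.1 + 1 = q.1 ∧ q.1 = i.1) ∨ (p.1 + 1 = q.1 ∧ p.1 = i.1) ∨
        (p.1 + 1 = i.1 ∧ i.1 + 1 = q.1) := by omega
    rcases hcases with ⟨h1, h2⟩ | ⟨h1, h2⟩ | ⟨h1, h2⟩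
    · -- p = i-1, q = i
      have hqi : q = i := Fin.ext h2
      have hpi : A p i ≠ 0 := by rw [h.1.apply]; exact hp
      have := (h.2.2 p i (by omega) ((zmod2_ne_zero_iff _).mp hpi)).2.1
      rw [hqi] at hq; exact hq this
    · -- p = i, q = i+1
      have hpi : p = i := Fin.ext h2
      have := (h.2.2 i q (by omega) ((zmod2_ne_zero_iff _).mp hq)).1
      rw [hpi] at hp
      exact hp this
    · -- p = i-1, q = i+1
      have hpi : A p i ≠ 0 := by rw [h.1.apply]; exact hp
      have := (h.2.2 p i (by omega) ((zmod2_ne_zero_iff _).mp hpi)).2.2.2 q (by omega)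
      exact hq this
  rcases lt_trichotomy j.1 j'.1 with hlt | heq | hgt
  · exact absurd (key j j' hj hj' hlt) (fun f => f)
  · exact Fin.ext heq
  · exact absurd (key j' j hj' hj hgt) (fun f => f)

lemma canon_sub {n : ℕ} {D : Matrix (Fin n) (Fin n) (ZMod 2)} (hD : IsCanonBlockDiag D)
    {k : ℕ} (hk : k ≤ n) :
    IsCanonBlockDiag (D.submatrix (Fin.castLE hk) (Fin.castLE hk)) := by
  refine ⟨?_, ?_, ?_⟩
  · ext i j
    simp only [transpose_apply, submatrix_apply]
    exact hD.1.apply _ _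
  · intro i j hij
    exact hD.2.1 _ _ hij
  · intro i j hij h1
    obtain ⟨c1, c2, c3, c4⟩ := hD.2.2 (Fin.castLE hk i) (Fin.castLE hk j) hij h1
    exact ⟨c1, c2, fun t ht => c3 (Fin.castLE hk t) ht, fun t ht => c4 (Fin.castLE hk t) ht⟩

lemma canon_sq_eq (h : IsCanonBlockDiag A) (i j : Fin m) :
    (A * A) i j = if i = j ∧ ∃ t, A i t ≠ 0 then 1 else 0 := by
  classical
  rw [mul_apply]
  by_cases hrow : ∃ t, A i t ≠ 0
  · obtain ⟨t₀, ht₀⟩ := hrow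
    rw [Finset.sum_eq_single t₀]
    · have h1 : A i t₀ = 1 := (zmod2_ne_zero_iff _).mp ht₀
      have hsymm : A t₀ i ≠ 0 := by rw [h.1.apply]; exact ht₀
      by_cases hji : i = j
      · subst hji
        rw [h1, one_mul, if_pos ⟨rfl, ⟨t₀, ht₀⟩⟩]
        exact (zmod2_ne_zero_iff _).mp hsymm
      · rw [if_neg (fun hc => hji hc.1)]
        have : A t₀ j = 0 := by
          by_contra hc
          exact hji (canon_row_unique h hsymm hc)
        rw [this, mul_zero]
    · intro t _ ht
      have : A i t = 0 := by
        by_contra hc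
        exact ht (canon_row_unique h hc ht₀)
      rw [this, zero_mul]
    · intro habs; exact absurd (Finset.mem_univ t₀) habs
  · rw [if_neg (fun hc => hrow hc.2)]
    apply Finset.sum_eq_zero
    intro t _
    have : A i t = 0 := by
      by_contra hc; exact hrow ⟨t, hc⟩
    rw [this, zero_mul]

lemma canon_cube (h : IsCanonBlockDiag A) : A * A * A = A := by
  classical
  ext i j
  rw [mul_apply, Finset.sum_eq_single i]
  · rw [canon_sq_eq h]
    by_cases hrow : ∃ t, A i t ≠ 0
    · rw [if_pos ⟨rfl, hrow⟩, one_mul]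
    · rw [if_neg (fun hc => hrow hc.2), zero_mul]
      by_contra hc
      exact hrow ⟨j, fun h0 => hc h0.symm⟩
  · intro t _ ht
    rw [canon_sq_eq h, if_neg (fun hc => ht hc.1.symm), zero_mul]
  · intro habs; exact absurd (Finset.mem_univ i) habs

open Classical in
lemma canon_rank (h : IsCanonBlockDiag A) :
    A.rank = Fintype.card {i : Fin m // ∃ t, A i t ≠ 0} := by
  classical
  have hsq : A * A = Matrix.diagonal (fun i => if ∃ t, A i t ≠ 0 then (1 : ZMod 2) else 0) := by
    ext i j
    rw [canon_sq_eq h, Matrix.diagonal_apply]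
    by_cases hij : i = j
    · subst hij
      by_cases hrow : ∃ t, A i t ≠ 0
      · rw [if_pos ⟨rfl, hrow⟩, if_pos rfl, if_pos hrow]
      · rw [if_neg (fun hc => hrow hc.2), if_pos rfl, if_neg hrow]
    · rw [if_neg (fun hc => hij hc.1), if_neg hij]
  have h1 : (A * A).rank ≤ A.rank := Matrix.rank_mul_le_left A A
  have h2 : A.rank ≤ (A * A).rank := by
    conv_lhs => rw [← canon_cube h]
    exact Matrix.rank_mul_le_left (A * A) A
  have : A.rank = (A * A).rank := le_antisymm h2 h1
  rw [this, hsq, Matrix.rank_diagonal]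
  apply Fintype.card_congr
  apply Equiv.subtypeEquivRight
  intro i
  by_cases hrow : ∃ t, A i t ≠ 0
  · simp [hrow]
  · simp [hrow]

lemma mem_map_castLEEmb {n k : ℕ} (hk : k ≤ n) (t : Fin n) :
    t ∈ Finset.univ.map (Fin.castLEEmb hk) ↔ t.1 < k := by
  constructor
  · intro ht
    obtain ⟨a, _, rfl⟩ := Finset.mem_map.mp ht
    exact a.2
  · intro ht
    exact Finset.mem_map.mpr ⟨⟨t.1, ht⟩, Finset.mem_univ _, Fin.ext rfl⟩

lemma sum_restrict {n k : ℕ} (hk : k ≤ n) (f : Fin n → ZMod 2)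
    (hf : ∀ t : Fin n, k ≤ t.1 → f t = 0) :
    ∑ t : Fin n, f t = ∑ t : Fin k, f (Fin.castLE hk t) := by
  rw [show (∑ t : Fin k, f (Fin.castLE hk t)) =
      ∑ t ∈ Finset.univ.map (Fin.castLEEmb hk), f t from by
        rw [Finset.sum_map]; simp only [Fin.castLEEmb_apply]]
  refine (Finset.sum_subset (Finset.subset_univ _) ?_).symm
  intro t _ ht
  exact hf t (le_of_not_gt (fun hc => ht ((mem_map_castLEEmb hk t).mpr hc)))

lemma sub_mul_lower {n k : ℕ} (hk : k ≤ n) (L A : Matrix (Fin n) (Fin n) (ZMod 2))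
    (hL : ∀ i j : Fin n, i < j → L i j = 0) :
    (L * A).submatrix (Fin.castLE hk) (Fin.castLE hk) =
      (L.submatrix (Fin.castLE hk) (Fin.castLE hk)) *
      (A.submatrix (Fin.castLE hk) (Fin.castLE hk)) := by
  ext i j
  simp only [submatrix_apply, mul_apply]
  exact sum_restrict hk _ (fun t ht => by
    rw [hL (Fin.castLE hk i) t (by simp [Fin.lt_def]; omega), zero_mul])

lemma sub_mul_upper {n k : ℕ} (hk : k ≤ n) (A U : Matrix (Fin n) (Fin n) (ZMod 2))
    (hU : ∀ i j : Fin n, j < i → U i j = 0) :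
    (A * U).submatrix (Fin.castLE hk) (Fin.castLE hk) =
      (A.submatrix (Fin.castLE hk) (Fin.castLE hk)) *
      (U.submatrix (Fin.castLE hk) (Fin.castLE hk)) := by
  ext i j
  simp only [submatrix_apply, mul_apply]
  exact sum_restrict hk _ (fun t ht => by
    rw [hU t (Fin.castLE hk j) (by simp [Fin.lt_def]; omega), mul_zero])

lemma rank_sub_congr {n k : ℕ} (hk : k ≤ n) (L D : Matrix (Fin n) (Fin n) (ZMod 2))
    (hL : ∀ i j : Fin n, i < j → L i j = 0) (hL1 : ∀ i : Fin n, L i i = 1) :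
    ((L * D * Lᵀ).submatrix (Fin.castLE hk) (Fin.castLE hk)).rank =
      (D.submatrix (Fin.castLE hk) (Fin.castLE hk)).rank := by
  have hLt : ∀ i j : Fin n, j < i → Lᵀ i j = 0 := fun i j hji => hL j i hji
  rw [sub_mul_upper hk (L * D) Lᵀ hLt, sub_mul_lower hk L D hL]
  set P := L.submatrix (Fin.castLE hk) (Fin.castLE hk) with hP
  set Q := D.submatrix (Fin.castLE hk) (Fin.castLE hk) with hQ
  have hsubT : Lᵀ.submatrix (Fin.castLE hk) (Fin.castLE hk) = Pᵀ := by
    rw [hP, Matrix.transpose_submatrix]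
  have hdet : IsUnit P.det := by
    have hbt : P.BlockTriangular OrderDual.toDual := by
      intro i j hij
      exact hL _ _ (by exact_mod_cast hij)
    rw [Matrix.det_of_lowerTriangular P hbt]
    have : ∀ i : Fin k, P i i = 1 := fun i => hL1 _
    simp [this]
  have hdetT : IsUnit Pᵀ.det := by rwa [Matrix.det_transpose]
  rw [hsubT, Matrix.rank_mul_eq_left_of_isUnit_det Pᵀ (P * Q) hdetT,
    Matrix.rank_mul_eq_right_of_isUnit_det P Q hdet]

def Dext {n : ℕ} (D : Matrix (Fin n) (Fin n) (ZMod 2)) (i j : ℕ) : ZMod 2 :=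
  if h : i < n ∧ j < n then D ⟨i, h.1⟩ ⟨j, h.2⟩ else 0

def cnt {n : ℕ} (D : Matrix (Fin n) (Fin n) (ZMod 2)) (k : ℕ) : ℕ :=
  ((Finset.range k).filter (fun i => ∃ j ∈ Finset.range k, Dext D i j ≠ 0)).card

section DextFacts

variable {n : ℕ} {D : Matrix (Fin n) (Fin n) (ZMod 2)}

lemma Dext_lt {i j : ℕ} (h : Dext D i j ≠ 0) : i < n ∧ j < n := by
  by_contra hc
  rw [Dext, dif_neg hc] at h
  exact h rfl

lemma Dext_apply {i j : ℕ} (hi : i < n) (hj : j < n) : Dext D i j = D ⟨i, hi⟩ ⟨j, hj⟩ :=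
  dif_pos ⟨hi, hj⟩

lemma Dext_symm (hD : IsCanonBlockDiag D) {i j : ℕ} (h : Dext D i j ≠ 0) :
    Dext D j i ≠ 0 := by
  obtain ⟨hi, hj⟩ := Dext_lt h
  rw [Dext_apply hi hj] at h
  rw [Dext_apply hj hi, hD.1.apply]
  exact h

lemma Dext_band (hD : IsCanonBlockDiag D) {i j : ℕ} (h : Dext D i j ≠ 0) :
    j ≤ i + 1 ∧ i ≤ j + 1 := by
  obtain ⟨hi, hj⟩ := Dext_lt h
  rw [Dext_apply hi hj] at h
  exact canon_band hD h

lemma Dext_uniq (hD : IsCanonBlockDiag D) {i j j' : ℕ} (h : Dext D i j ≠ 0)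
    (h' : Dext D i j' ≠ 0) : j = j' := by
  obtain ⟨hi, hj⟩ := Dext_lt h
  obtain ⟨-, hj'⟩ := Dext_lt h'
  rw [Dext_apply hi hj] at h
  rw [Dext_apply hi hj'] at h'
  exact congrArg Fin.val (canon_row_unique hD h h')

end DextFacts

lemma rank_sub_eq_cnt {n : ℕ} {D : Matrix (Fin n) (Fin n) (ZMod 2)}
    (hD : IsCanonBlockDiag D) {k : ℕ} (hk : k ≤ n) :
    (D.submatrix (Fin.castLE hk) (Fin.castLE hk)).rank = cnt D k := by
  classical
  rw [canon_rank (canon_sub hD hk), cnt, Fintype.card_subtype]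
  apply Finset.card_bij (fun (a : Fin k) _ => a.1)
  · intro a ha
    rw [Finset.mem_filter] at ha ⊢
    obtain ⟨-, t₀, ht₀⟩ := ha
    refine ⟨Finset.mem_range.mpr a.2, t₀.1, Finset.mem_range.mpr t₀.2, ?_⟩
    rw [Dext_apply (lt_of_lt_of_le a.2 hk) (lt_of_lt_of_le t₀.2 hk)]
    exact ht₀
  · intro a _ b _ hab
    exact Fin.ext hab
  · intro b hb
    rw [Finset.mem_filter, Finset.mem_range] at hb
    obtain ⟨hbk, j, hjk, hne⟩ := hb
    rw [Finset.mem_range] at hjk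
    refine ⟨⟨b, hbk⟩, ?_, rfl⟩
    rw [Finset.mem_filter]
    refine ⟨Finset.mem_univ _, ⟨⟨j, hjk⟩, ?_⟩⟩
    rw [Dext_apply (lt_of_lt_of_le hbk hk) (lt_of_lt_of_le hjk hk)] at hne
    exact hne

lemma cnt_decode {n : ℕ} {D : Matrix (Fin n) (Fin n) (ZMod 2)} (hD : IsCanonBlockDiag D)
    {k : ℕ} (hk : k < n) :
    (Dext D k k ≠ 0 ↔ cnt D (k+1) = cnt D k + 1) ∧
    (0 < k → (Dext D (k-1) k ≠ 0 ↔ cnt D (k+1) = cnt D k + 2)) := by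
  classical
  set S : ℕ → Finset ℕ := fun m =>
    (Finset.range m).filter (fun i => ∃ j ∈ Finset.range m, Dext D i j ≠ 0) with hS
  have hcnt : ∀ m, cnt D m = (S m).card := fun m => rfl
  have hmono : S k ⊆ S (k+1) := by
    intro i hi
    rw [hS, Finset.mem_filter, Finset.mem_range] at hi ⊢
    obtain ⟨h1, j, hj, hne⟩ := hi
    rw [Finset.mem_range] at hj
    exact ⟨by omega, j, Finset.mem_range.mpr (by omega), hne⟩
  have hknotin : k ∉ S k := by
    rw [hS, Finset.mem_filter, Finset.mem_range]
    rintro ⟨hc, -⟩; omega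
  by_cases hkk : Dext D k k ≠ 0
  · -- case A : diagonal entry nonzero
    have hno : ¬ (0 < k ∧ Dext D (k-1) k ≠ 0) := by
      rintro ⟨h0, hoff⟩
      have h1 : Dext D k (k-1) ≠ 0 := Dext_symm hD hoff
      have := Dext_uniq hD h1 hkk
      omega
    have hAeq : S (k+1) = insert k (S k) := by
      ext i
      rw [Finset.mem_insert, hS]
      simp only [Finset.mem_filter, Finset.mem_range]
      constructor
      · rintro ⟨hik, j, hj, hne⟩
        by_cases hik' : i = k
        · exact Or.inl hik'
        · refine Or.inr ⟨by omega, ?_⟩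
          by_cases hjk : j = k
          · subst hjk
            exfalso
            have h1 : Dext D j i ≠ 0 := Dext_symm hD hne
            have := Dext_uniq hD h1 hkk
            omega
          · exact ⟨j, by omega, hne⟩
      · rintro (h | ⟨hik, j, hj, hne⟩)
        · subst h; exact ⟨by omega, i, by omega, hkk⟩
        · exact ⟨by omega, j, by omega, hne⟩
    have hcard : cnt D (k+1) = cnt D k + 1 := by
      rw [hcnt, hcnt, hAeq, Finset.card_insert_of_notMem hknotin]
    refine ⟨⟨fun _ => hcard, fun _ => hkk⟩, fun h0 => ⟨fun hoff => absurd ⟨h0, hoff⟩ hno,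
      fun hc => ?_⟩⟩
    omega
  · by_cases hoff : 0 < k ∧ Dext D (k-1) k ≠ 0
    · -- case B : 2x2 block straddling k-1,k
      obtain ⟨h0, hoffk⟩ := hoff
      have hsym : Dext D k (k-1) ≠ 0 := Dext_symm hD hoffk
      have hBeq : S (k+1) = insert k (insert (k-1) (S k)) := by
        ext i
        rw [Finset.mem_insert, Finset.mem_insert, hS]
        simp only [Finset.mem_filter, Finset.mem_range]
        constructor
        · rintro ⟨hik, j, hj, hne⟩
          by_cases hik' : i = k
          · exact Or.inl hik'
          · by_cases hik1 : i = k - 1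
            · exact Or.inr (Or.inl hik1)
            · refine Or.inr (Or.inr ⟨by omega, ?_⟩)
              by_cases hjk : j = k
              · subst hjk
                exfalso
                have hb := Dext_band hD hne
                omega
              · exact ⟨j, by omega, hne⟩
        · rintro (h | h | ⟨hik, j, hj, hne⟩)
          · subst h; exact ⟨by omega, i - 1, by omega, hsym⟩
          · subst h; exact ⟨by omega, k, by omega, hoffk⟩
          · exact ⟨by omega, j, by omega, hne⟩
      have hk1notin : k - 1 ∉ S k := by
        rw [hS, Finset.mem_filter, Finset.mem_range]
        rintro ⟨-, j, hj, hne⟩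
        rw [Finset.mem_range] at hj
        have := Dext_uniq hD hne hoffk
        omega
      have hknotin2 : k ∉ insert (k-1) (S k) := by
        rw [Finset.mem_insert]
        rintro (hc | hc)
        · omega
        · exact hknotin hc
      have hcard : cnt D (k+1) = cnt D k + 2 := by
        rw [hcnt, hcnt, hBeq, Finset.card_insert_of_notMem hknotin2,
          Finset.card_insert_of_notMem hk1notin]
      exact ⟨⟨fun hc => absurd hc hkk, fun hc => by omega⟩,
        fun _ => ⟨fun _ => hcard, fun _ => hoffk⟩⟩
    · -- case C : no new nonzero row
      have hCeq : S (k+1) = S k := by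
        apply Finset.Subset.antisymm _ hmono
        intro i hi
        rw [hS, Finset.mem_filter, Finset.mem_range] at hi
        obtain ⟨hik, j, hj, hne⟩ := hi
        rw [Finset.mem_range] at hj
        rw [hS, Finset.mem_filter, Finset.mem_range]
        by_cases hik' : i = k
        · subst hik'
          exfalso
          have hb := Dext_band hD hne
          by_cases hjk : j = i
          · subst hjk; exact hkk hne
          · have hji : j = i - 1 ∧ 0 < i := by omega
            have hs := Dext_symm hD hne
            rw [hji.1] at hs
            exact hoff ⟨hji.2, hs⟩
        · refine ⟨by omega, ?_⟩
          by_cases hjk : j = k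
          · subst hjk
            exfalso
            have hb := Dext_band hD hne
            have hij : i = j - 1 ∧ 0 < j := by omega
            rw [hij.1] at hne
            exact hoff ⟨hij.2, hne⟩
          · exact ⟨j, Finset.mem_range.mpr (by omega), hne⟩
      have hcard : cnt D (k+1) = cnt D k := by rw [hcnt, hcnt, hCeq]
      refine ⟨⟨fun hc => absurd hc hkk, fun hc => by omega⟩,
        fun h0 => ⟨fun hc => absurd ⟨h0, hc⟩ hoff, fun hc => by omega⟩⟩

lemma canon_determined {n : ℕ} {D E : Matrix (Fin n) (Fin n) (ZMod 2)}
    (hD : IsCanonBlockDiag D) (hE : IsCanonBlockDiag E)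
    (hcnt : ∀ k, k ≤ n → cnt D k = cnt E k) : D = E := by
  have key : ∀ k, k < n → (Dext D k k = Dext E k k) ∧
      (0 < k → Dext D (k-1) k = Dext E (k-1) k) := by
    intro k hk
    obtain ⟨d1, d2⟩ := cnt_decode hD hk
    obtain ⟨e1, e2⟩ := cnt_decode hE hk
    have hc1 := hcnt (k+1) (by omega)
    have hc0 := hcnt k (by omega)
    constructor
    · apply zmod2_eq_of_ne_iff
      rw [d1, e1, hc1, hc0]
    · intro h0
      apply zmod2_eq_of_ne_iff
      rw [d2 h0, e2 h0, hc1, hc0]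
  ext i j
  by_cases h0 : i.1 = j.1
  · have hij : i = j := Fin.ext h0
    subst hij
    have := (key i.1 i.2).1
    rwa [Dext_apply i.2 i.2, Dext_apply i.2 i.2] at this
  · by_cases h1 : i.1 + 1 = j.1
    · have := (key j.1 j.2).2 (by omega)
      rw [Dext_apply (by omega) j.2, Dext_apply (by omega) j.2] at this
      have hi : i = ⟨j.1 - 1, by omega⟩ := Fin.ext (by show i.1 = j.1 - 1; omega)
      rw [hi]
      exact this
    · by_cases h2 : j.1 + 1 = i.1
      · rw [← hD.1.apply, ← hE.1.apply]
        have := (key i.1 i.2).2 (by omega)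
        rw [Dext_apply (by omega) i.2, Dext_apply (by omega) i.2] at this
        have hj : j = ⟨i.1 - 1, by omega⟩ := Fin.ext (by show j.1 = i.1 - 1; omega)
        rw [hj]
        exact this
      · rw [hD.2.1 i j (by omega), hE.2.1 i j (by omega)]

theorem stmt_11 (n : ℕ) (B L M D E : Matrix (Fin n) (Fin n) (ZMod 2))
    (hB : B.IsSymm)
    (hL : ∀ i j : Fin n, i < j → L i j = 0) (hL1 : ∀ i : Fin n, L i i = 1)
    (hM : ∀ i j : Fin n, i < j → M i j = 0) (hM1 : ∀ i : Fin n, M i i = 1)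
    (hD : IsCanonBlockDiag D) (hE : IsCanonBlockDiag E)
    (h1 : B = L * D * Lᵀ) (h2 : B = M * E * Mᵀ) :
    D = E := by
  apply canon_determined hD hE
  intro k hk
  have h3 : L * D * Lᵀ = M * E * Mᵀ := h1.symm.trans h2
  have h4 := congrArg (fun X : Matrix (Fin n) (Fin n) (ZMod 2) =>
    (X.submatrix (Fin.castLE hk) (Fin.castLE hk)).rank) h3
  rw [rank_sub_congr hk L D hL hL1, rank_sub_congr hk M E hM hM1] at h4
  rw [← rank_sub_eq_cnt hD hk, ← rank_sub_eq_cnt hE hk]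
  exact h4
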